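/- Let w ∈ W and let γ be a maximal inversion of w, i.e. γ ∈ inv(w) = {α ∈ Φ⁺ : w⁻¹α ∈ Φ⁻} and no α ∈ inv(w) satisfies γ < α (meaning α − γ is a nonzero sum of positive roots). Then −w⁻¹γ is a quantum root and ℓ(w s_{−w⁻¹γ}) = ℓ(w) − ℓ(s_{−w⁻¹γ}); equivalently, w → s_γ w is a quantum edge in the quantum Bruhat graph. -/

import Mathlib

open Classical

/-- A reduced crystallographic root system with a chosen positive system,
inside a `ℚ`-vector space `V`.  `pairing α β` is `⟨α^∨, β⟩`. -/
structure RootSystemData (V : Type*) [AddCommGroup V] [Module ℚ V] where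
  Φ : Set V
  finite : Φ.Finite
  pairing : V → Module.Dual ℚ V
  zero_not_mem : (0 : V) ∉ Φ
  neg_mem : ∀ α ∈ Φ, -α ∈ Φ
  pairing_self : ∀ α ∈ Φ, pairing α α = 2
  pairing_int : ∀ α ∈ Φ, ∀ β ∈ Φ, ∃ n : ℤ, pairing α β = (n : ℚ)
  reflect_mem : ∀ α ∈ Φ, ∀ β ∈ Φ, β - pairing α β • α ∈ Φ
  reduced : ∀ α ∈ Φ, ∀ c : ℚ, c • α ∈ Φ → c = 1 ∨ c = -1
  pos : Set V
  pos_sub : pos ⊆ Φ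
  mem_pos_or_neg : ∀ α ∈ Φ, α ∈ pos ∨ -α ∈ pos
  not_pos_and_neg : ∀ α ∈ pos, -α ∉ pos
  pos_add : ∀ α ∈ pos, ∀ β ∈ pos, α + β ∈ Φ → α + β ∈ pos

namespace RootSystemData

variable {V : Type*} [AddCommGroup V] [Module ℚ V] (R : RootSystemData V)

/-- The reflection `s_α` as a linear endomorphism of `V`. -/
noncomputable def refl (α : V) : Module.End ℚ V := 1 - (R.pairing α).smulRight α

/-- Indicator function `Φ⁺` of the positive roots. -/
noncomputable def ind (β : V) : ℤ := if β ∈ R.pos then 1 else 0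

/-- `2ρ`, the sum of the positive roots. -/
noncomputable def twoRho : V := ∑ᶠ α ∈ R.pos, α

/-- The length of a (Weyl group) element: the number of positive roots sent to
negative roots. -/
noncomputable def len (f : Module.End ℚ V) : ℕ := {α | α ∈ R.pos ∧ f α ∉ R.pos}.ncard

/-- `f` belongs to the Weyl group, i.e. is a product of reflections. -/
def IsWeyl (f : Module.End ℚ V) : Prop :=
  f ∈ Submonoid.closure {g : Module.End ℚ V | ∃ α ∈ R.pos, g = R.refl α}

/-- A quantum root: `ℓ(s_α) = ⟨α^∨, 2ρ⟩ - 1`. -/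
def IsQuantumRoot (α : V) : Prop :=
  α ∈ R.pos ∧ (R.len (R.refl α) : ℚ) = R.pairing α R.twoRho - 1

/-- Edges of the quantum Bruhat graph `QB(W)`, together with their weights:
a Bruhat edge `w → w s_α` of weight `0` when `ℓ(w s_α) = ℓ(w) + 1`, and a
quantum edge of weight `α^∨` when `ℓ(w s_α) = ℓ(w) + 1 - ⟨α^∨, 2ρ⟩`. -/
def Edge (u v : Module.End ℚ V) (ω : Module.Dual ℚ V) : Prop :=
  ∃ α ∈ R.pos, v = u * R.refl α ∧
    ((R.len v = R.len u + 1 ∧ ω = 0) ∨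
     ((R.len v : ℚ) = (R.len u : ℚ) + 1 - R.pairing α R.twoRho ∧ ω = R.pairing α))

/-- Paths in the quantum Bruhat graph; `Path R u v ω n` means there is a path
from `u` to `v` with `n` edges and total weight `ω`. -/
inductive Path (R : RootSystemData V) :
    Module.End ℚ V → Module.End ℚ V → Module.Dual ℚ V → ℕ → Prop
  | nil (u : Module.End ℚ V) : Path R u u 0 0
  | cons {u v w : Module.End ℚ V} {ω' ω : Module.Dual ℚ V} {n : ℕ} :
      R.Edge u v ω' → Path R v w ω n → Path R u w (ω' + ω) (n + 1)

/-- `ω` is the weight `wt(u ⇒ v)` of a shortest path from `u` to `v` in `QB(W)`. -/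
def IsWt (u v : Module.End ℚ V) (ω : Module.Dual ℚ V) : Prop :=
  ∃ n, R.Path u v ω n ∧ ∀ (m : ℕ) (ω' : Module.Dual ℚ V), R.Path u v ω' m → n ≤ m

/-- The distance `d(u ⇒ v)` in the quantum Bruhat graph. -/
noncomputable def qbDist (u v : Module.End ℚ V) : ℕ :=
  sInf {n | ∃ ω, R.Path u v ω n}

/-- The cone of nonnegative integral sums of positive coroots; `μ ≤ ν` in the
coroot lattice iff `ν - μ` lies in this cone. -/
def corootCone : AddSubmonoid (Module.Dual ℚ V) :=
  AddSubmonoid.closure {d | ∃ α ∈ R.pos, d = R.pairing α}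

/-- The coroot lattice `ℤΦ^∨`. -/
def corootLattice : AddSubgroup (Module.Dual ℚ V) :=
  AddSubgroup.closure {d | ∃ α ∈ R.pos, d = R.pairing α}


/-- The set of inversions of `w`, in terms of the inverse `winv` of `w`:
positive roots sent to negative roots by `w⁻¹`. -/
def inversions (winv : Module.End ℚ V) : Set V :=
  {α | α ∈ R.pos ∧ winv α ∉ R.pos}

/-- `γ` is a maximal inversion of `w`: no other inversion `α` satisfies that
`α - γ` is a (nonzero) sum of positive roots. -/
def IsMaxInv (winv : Module.End ℚ V) (γ : V) : Prop :=
  γ ∈ R.inversions winv ∧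
    ∀ α ∈ R.inversions winv, α ≠ γ → α - γ ∉ AddSubmonoid.closure R.pos


section Lemmas

lemma refl_apply (α x : V) : R.refl α x = x - R.pairing α x • α := by
  simp [refl]

lemma root_ne_zero {α : V} (h : α ∈ R.Φ) : α ≠ 0 := fun e => R.zero_not_mem (e ▸ h)

lemma refl_mem {α x : V} (hα : α ∈ R.Φ) (hx : x ∈ R.Φ) : R.refl α x ∈ R.Φ := by
  rw [R.refl_apply]; exact R.reflect_mem α hα x hx

lemma refl_refl {α : V} (hα : α ∈ R.Φ) (x : V) : R.refl α (R.refl α x) = x := by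
  simp only [refl_apply, map_sub, map_smul, R.pairing_self α hα, smul_eq_mul]
  module

lemma refl_root_self {α : V} (hα : α ∈ R.Φ) : R.refl α α = -α := by
  rw [R.refl_apply, R.pairing_self α hα]
  module

lemma refl_inj {α : V} (hα : α ∈ R.Φ) : Function.Injective (R.refl α) :=
  Function.LeftInverse.injective (g := R.refl α) (R.refl_refl hα)

lemma neg_mem_pos {x : V} (hx : x ∈ R.Φ) (h : x ∉ R.pos) : -x ∈ R.pos :=
  (R.mem_pos_or_neg x hx).resolve_left h

lemma weyl_maps_phi {f : Module.End ℚ V} (hf : R.IsWeyl f) : ∀ x ∈ R.Φ, f x ∈ R.Φ := by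
  let S : Submonoid (Module.End ℚ V) :=
    { carrier := {g | ∀ x ∈ R.Φ, g x ∈ R.Φ}
      one_mem' := by intro x hx; simpa using hx
      mul_mem' := by
        intro a b ha hb x hx
        have : (a * b) x = a (b x) := rfl
        rw [this]; exact ha _ (hb x hx) }
  have hle : Submonoid.closure {g : Module.End ℚ V | ∃ α ∈ R.pos, g = R.refl α} ≤ S := by
    apply Submonoid.closure_le.mpr
    rintro g ⟨α, hα, rfl⟩ x hx
    exact R.refl_mem (R.pos_sub hα) hx
  exact hle hf

lemma pairing_refl_apply {α δ z : V} (hα : α ∈ R.Φ) (hδ : δ ∈ R.Φ) (hz : z ∈ R.Φ) :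
    R.pairing (R.refl α δ) z = R.pairing δ (R.refl α z) := by
  set m := R.refl α δ with hm
  have hmΦ : m ∈ R.Φ := R.refl_mem hα hδ
  set d : V → ℚ := fun x => R.pairing δ (R.refl α x) - R.pairing m x with hd
  suffices h : d z = 0 by
    have : R.pairing δ (R.refl α z) - R.pairing m z = 0 := h
    linarith
  have hc2 : R.pairing m m = 2 := R.pairing_self m hmΦ
  set T : V → V := fun x => R.refl m (R.refl α (R.refl δ (R.refl α x))) with hT
  have hTapp : ∀ x, T x = x + d x • m := by
    intro x
    show R.refl m (R.refl α (R.refl δ (R.refl α x))) = _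
    have e1 : R.refl α (R.refl δ (R.refl α x)) =
        x - R.pairing δ (R.refl α x) • m := by
      rw [R.refl_apply δ (R.refl α x), map_sub, map_smul, R.refl_refl hα, hm]
    rw [e1, R.refl_apply, map_sub, map_smul, hc2, hd]
    simp only [smul_eq_mul]
    module
  have hTmem : ∀ x ∈ R.Φ, T x ∈ R.Φ := fun x hx =>
    R.refl_mem hmΦ (R.refl_mem hα (R.refl_mem hδ (R.refl_mem hα hx)))
  have hrαm : R.refl α m = δ := by rw [hm, R.refl_refl hα]
  have hdm : d m = 0 := by
    rw [hd]; simp only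
    rw [hrαm, R.pairing_self δ hδ, hc2]; ring
  have hdlin : ∀ (x : V) (c : ℚ), d (x + c • m) = d x := by
    intro x c
    have hdm' : R.pairing δ (R.refl α m) - R.pairing m m = 0 := hdm
    simp only [hd, map_add, map_smul, smul_eq_mul]
    linear_combination c * hdm'
  by_contra hdz
  have hkey : ∀ n : ℕ, z + (n : ℚ) • d z • m ∈ R.Φ := by
    intro n
    induction n with
    | zero => simpa using hz
    | succ n ih =>
      have h1 := hTmem _ ih
      rw [hTapp] at h1
      have e2 : (n : ℚ) • d z • m = ((n : ℚ) * d z) • m := by rw [smul_smul]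
      have e3 : d (z + (n : ℚ) • d z • m) = d z := by rw [e2, hdlin]
      rw [e3] at h1
      have e4 : z + (n : ℚ) • d z • m + d z • m = z + ((n : ℚ) + 1) • d z • m := by
        module
      rw [e4] at h1
      convert h1 using 3
      push_cast; ring
  have hinj : Function.Injective (fun n : ℕ => z + (n : ℚ) • d z • m) := by
    intro a b hab
    simp only at hab
    have h5 : ((a : ℚ) - (b : ℚ)) • d z • m = 0 := by
      have := sub_eq_zero.mpr hab
      rw [show z + (a:ℚ) • d z • m - (z + (b:ℚ) • d z • m)
            = ((a:ℚ) - (b:ℚ)) • d z • m by module] at this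
      exact this
    rcases smul_eq_zero.mp h5 with h6 | h6
    · have : (a : ℚ) = b := by linarith [sub_eq_zero.mp (by exact h6)]
      exact_mod_cast this
    · rcases smul_eq_zero.mp h6 with h7 | h7
      · exact absurd h7 hdz
      · exact absurd h7 (R.root_ne_zero hmΦ)
  exact absurd (Set.infinite_of_injective_forall_mem hinj hkey) R.finite.not_infinite

lemma pairing_neg_left {θ z : V} (hθ : θ ∈ R.Φ) (hz : z ∈ R.Φ) :
    R.pairing (-θ) z = - R.pairing θ z := by
  have h := R.pairing_refl_apply hθ hθ hz
  rw [R.refl_root_self hθ] at h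
  rw [h, R.refl_apply, map_sub, map_smul, R.pairing_self θ hθ]
  simp; ring

/-- An auxiliary invariant form. -/
noncomputable def B (x y : V) : ℚ :=
  ∑ δ ∈ R.finite.toFinset, R.pairing δ x * R.pairing δ y

lemma B_symm (x y : V) : R.B x y = R.B y x := by
  simp [B, mul_comm]

lemma B_add_right (x y z : V) : R.B x (y + z) = R.B x y + R.B x z := by
  simp [B, map_add, mul_add, Finset.sum_add_distrib]

lemma B_zero_right (x : V) : R.B x 0 = 0 := by simp [B]

lemma B_smul_right (c : ℚ) (x y : V) : R.B x (c • y) = c * R.B x y := by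
  simp only [B, map_smul, smul_eq_mul, Finset.mul_sum]
  congr 1; ext δ; ring

lemma B_neg_right (x y : V) : R.B x (-y) = - R.B x y := by simp [B]

lemma B_sub_right (x y z : V) : R.B x (y - z) = R.B x y - R.B x z := by
  simp [B, map_sub, mul_sub, Finset.sum_sub_distrib]

lemma B_sub_left (x y z : V) : R.B (y - z) x = R.B y x - R.B z x := by
  rw [R.B_symm, R.B_sub_right, R.B_symm x y, R.B_symm x z]

lemma B_smul_left (c : ℚ) (x y : V) : R.B (c • y) x = c * R.B y x := by
  rw [R.B_symm, R.B_smul_right, R.B_symm]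

lemma B_neg_left (x y : V) : R.B (-y) x = - R.B y x := by
  rw [R.B_symm, R.B_neg_right, R.B_symm]

lemma B_self_nonneg (x : V) : 0 ≤ R.B x x :=
  Finset.sum_nonneg fun i _ => mul_self_nonneg _

lemma B_self_ge {θ : V} (hθ : θ ∈ R.Φ) : 4 ≤ R.B θ θ := by
  unfold B
  have h := Finset.single_le_sum (f := fun δ => R.pairing δ θ * R.pairing δ θ)
    (fun i _ => mul_self_nonneg _) (R.finite.mem_toFinset.mpr hθ)
  simp only [R.pairing_self θ hθ] at h
  norm_num at h
  exact h

lemma B_self_pos {θ : V} (hθ : θ ∈ R.Φ) : 0 < R.B θ θ :=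
  lt_of_lt_of_le (by norm_num) (R.B_self_ge hθ)

lemma B_refl_eq {α x y : V} (hα : α ∈ R.Φ) (hx : x ∈ R.Φ) (hy : y ∈ R.Φ) :
    R.B (R.refl α x) (R.refl α y) = R.B x y := by
  unfold B
  refine Finset.sum_bij' (fun δ _ => R.refl α δ) (fun δ _ => R.refl α δ)
    ?_ ?_ ?_ ?_ ?_
  · intro δ hδ
    exact R.finite.mem_toFinset.mpr (R.refl_mem hα (R.finite.mem_toFinset.mp hδ))
  · intro δ hδ
    exact R.finite.mem_toFinset.mpr (R.refl_mem hα (R.finite.mem_toFinset.mp hδ))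
  · intro δ hδ; exact R.refl_refl hα δ
  · intro δ hδ; exact R.refl_refl hα δ
  · intro δ hδ
    have hδΦ := R.finite.mem_toFinset.mp hδ
    rw [R.pairing_refl_apply hα hδΦ hx, R.pairing_refl_apply hα hδΦ hy]

lemma B_pairing {α θ : V} (hα : α ∈ R.Φ) (hθ : θ ∈ R.Φ) :
    2 * R.B α θ = R.pairing α θ * R.B α α := by
  have h := R.B_refl_eq hα hα hθ
  rw [R.refl_root_self hα, R.refl_apply, R.B_neg_left, R.B_sub_right,
    R.B_smul_right] at h
  linarith

lemma B_sq_le (x θ : V) (hθ : 0 < R.B θ θ) :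
    R.B x θ * R.B x θ ≤ R.B x x * R.B θ θ := by
  have h0 := R.B_self_nonneg (R.B θ θ • x - R.B x θ • θ)
  simp only [R.B_sub_right, R.B_sub_left, R.B_smul_left, R.B_smul_right] at h0
  have hs := R.B_symm x θ
  rw [← hs] at h0
  nlinarith [h0, hθ]

lemma pairing_pos_of_B_pos {θ α : V} (hθ : θ ∈ R.Φ) (hα : α ∈ R.Φ)
    (h : 0 < R.B θ α) : 0 < R.pairing θ α ∧ 0 < R.pairing α θ := by
  have h1 := R.B_pairing hθ hα
  have h2 := R.B_pairing hα hθ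
  have hs := R.B_symm θ α
  have h4θ := R.B_self_pos hθ
  have h4α := R.B_self_pos hα
  constructor <;> nlinarith

lemma pairing_prod_le {θ α : V} (hθ : θ ∈ R.Φ) (hα : α ∈ R.Φ) (h : 0 < R.B θ α) :
    R.pairing θ α * R.pairing α θ ≤ 4 := by
  have h1 := R.B_pairing hθ hα
  have h2 := R.B_pairing hα hθ
  have hs := R.B_symm θ α
  have h4θ := R.B_self_pos hθ
  have h4α := R.B_self_pos hα
  have hcs := R.B_sq_le θ α (R.B_self_pos hα)
  nlinarith [mul_pos h4θ h4α]

lemma eq_of_pairing_two_two {θ α : V} (hθ : θ ∈ R.Φ) (hα : α ∈ R.Φ)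
    (h1 : R.pairing θ α = 2) (h2 : R.pairing α θ = 2) : θ = α := by
  by_contra hne
  have hself_θ := R.pairing_self θ hθ
  have hself_α := R.pairing_self α hα
  set v : ℕ → V := fun k => ((2 * k + 1 : ℚ)) • θ - ((2 * k : ℚ)) • α with hv
  have hvmem : ∀ k, v k ∈ R.Φ := by
    intro k
    induction k with
    | zero => simpa [hv] using hθ
    | succ k ih =>
      have hstep : v (k + 1) = R.refl θ (R.refl α (v k)) := by
        rw [R.refl_apply, R.refl_apply]
        simp only [hv, map_sub, map_smul, smul_eq_mul, h1, h2, hself_θ, hself_α]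
        push_cast
        module
      rw [hstep]
      exact R.refl_mem hθ (R.refl_mem hα ih)
  have hinj : Function.Injective v := by
    intro a b hab
    simp only [hv] at hab
    have h5 : ((2 * a : ℚ) - 2 * b) • (θ - α) = 0 := by
      rw [show ((2*a:ℚ) - 2*b) • (θ - α)
          = (((2*a+1:ℚ)) • θ - ((2*a:ℚ)) • α) - (((2*b+1:ℚ)) • θ - ((2*b:ℚ)) • α) by module]
      rw [hab]; simp
    rcases smul_eq_zero.mp h5 with h6 | h6
    · have : (a : ℚ) = b := by linarith [h6]
      exact_mod_cast this
    · exact absurd (sub_eq_zero.mp h6) hne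
  exact absurd (Set.infinite_of_injective_forall_mem hinj hvmem) R.finite.not_infinite

lemma sub_mem_of_B_pos {θ α : V} (hθ : θ ∈ R.Φ) (hα : α ∈ R.Φ)
    (h : 0 < R.B θ α) : θ = α ∨ θ - α ∈ R.Φ := by
  obtain ⟨hp1, hp2⟩ := R.pairing_pos_of_B_pos hθ hα h
  obtain ⟨n, hn⟩ := R.pairing_int θ hθ α hα
  obtain ⟨k, hk⟩ := R.pairing_int α hα θ hθ
  have hprod := R.pairing_prod_le hθ hα h
  rw [hn] at hp1
  rw [hk] at hp2
  rw [hn, hk] at hprod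
  have hn1 : 1 ≤ n := by exact_mod_cast hp1
  have hk1 : 1 ≤ k := by exact_mod_cast hp2
  have hprod' : n * k ≤ 4 := by exact_mod_cast hprod
  by_cases hkone : k = 1
  · right
    have := R.refl_mem hα hθ
    rw [R.refl_apply, hk, hkone] at this
    simpa using this
  · by_cases hnone : n = 1
    · right
      have := R.refl_mem hθ hα
      rw [R.refl_apply, hn, hnone] at this
      have := R.neg_mem _ this
      simpa using this
    · left
      have hn2 : 2 ≤ n := by omega
      have hk2 : 2 ≤ k := by omega
      have hne : n = 2 := by nlinarith
      have hke : k = 2 := by nlinarith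
      exact R.eq_of_pairing_two_two hθ hα
        (by rw [hn, hne]; norm_num) (by rw [hk, hke]; norm_num)

lemma B_list_sum (a : V) (l : List V) : R.B a l.sum = (l.map (R.B a)).sum := by
  induction l with
  | nil => simp [R.B_zero_right]
  | cons b t ih => simp [R.B_add_right, ih]

lemma pos_list_sum_ne_aux :
    ∀ (n : ℕ) (l : List V), l.length ≤ n → (∀ x ∈ l, x ∈ R.pos) → l ≠ [] →
      l.sum ≠ 0 := by
  intro n
  induction n with
  | zero =>
    intro l hlen _ hne
    cases l with
    | nil => exact absurd rfl hne
    | cons a t => simp at hlen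
  | succ n ih =>
    rintro (_ | ⟨a, t⟩) hlen hmem hne hsum
    · exact hne rfl
    · have hapos : a ∈ R.pos := hmem a List.mem_cons_self
      have haΦ : a ∈ R.Φ := R.pos_sub hapos
      cases t with
      | nil =>
        simp only [List.sum_cons, List.sum_nil, add_zero] at hsum
        exact R.zero_not_mem (hsum ▸ haΦ)
      | cons b t' =>
        have hBz : R.B a a + ((b :: t').map (R.B a)).sum = 0 := by
          have h1 : R.B a (a :: b :: t').sum = 0 := by rw [hsum]; exact R.B_zero_right a
          rw [List.sum_cons, R.B_add_right, R.B_list_sum] at h1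
          exact h1
        have h4 : 4 ≤ R.B a a := R.B_self_ge haΦ
        have hneg : ((b :: t').map (R.B a)).sum < 0 := by linarith
        obtain ⟨q, hqmem, hq⟩ : ∃ q ∈ b :: t', R.B a q < 0 := by
          by_contra hcon
          push_neg at hcon
          have : 0 ≤ ((b :: t').map (R.B a)).sum := by
            apply List.sum_nonneg
            intro x hx
            obtain ⟨q, hq1, rfl⟩ := List.mem_map.mp hx
            exact hcon q hq1
          linarith
        have hqpos : q ∈ R.pos := hmem q (List.mem_cons_of_mem _ hqmem)
        have hqΦ : q ∈ R.Φ := R.pos_sub hqpos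
        have hBpos : 0 < R.B a (-q) := by rw [R.B_neg_right]; linarith
        rcases R.sub_mem_of_B_pos haΦ (R.neg_mem q hqΦ) hBpos with heq | hmem2
        · exact R.not_pos_and_neg q hqpos (heq ▸ hapos)
        · rw [sub_neg_eq_add] at hmem2
          have haq : a + q ∈ R.pos := R.pos_add a hapos q hqpos hmem2
          obtain ⟨s₁, s₂, hsplit⟩ := List.append_of_mem hqmem
          refine ih ((a + q) :: (s₁ ++ s₂)) ?_ ?_ (by simp) ?_
          · have hlen2 : (b :: t').length = s₁.length + s₂.length + 1 := by
              rw [hsplit]; simp; omega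
            simp only [List.length_cons, List.length_append] at hlen hlen2 ⊢
            omega
          · intro x hx
            rcases List.mem_cons.mp hx with rfl | hx2
            · exact haq
            · apply hmem
              apply List.mem_cons_of_mem
              rw [hsplit]
              rcases List.mem_append.mp hx2 with h | h
              · exact List.mem_append.mpr (Or.inl h)
              · exact List.mem_append.mpr (Or.inr (List.mem_cons_of_mem _ h))
          · rw [hsplit] at hsum
            simp only [List.sum_cons, List.sum_append] at hsum ⊢
            rw [show a + q + (s₁.sum + s₂.sum) = a + (s₁.sum + (q + s₂.sum)) by abel]
            exact hsum

lemma pos_list_sum_ne (l : List V) (hl : ∀ x ∈ l, x ∈ R.pos) (hne : l ≠ []) :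
    l.sum ≠ 0 :=
  R.pos_list_sum_ne_aux l.length l le_rfl hl hne

lemma pos_add_nsmul_ne_zero (a g : V) (ha : a ∈ R.pos) (hg : g ∈ R.pos) (k : ℕ) :
    a + (k : ℚ) • g ≠ 0 := by
  intro h
  apply R.pos_list_sum_ne (a :: List.replicate k g) ?_ (by simp) ?_
  · intro x hx
    rcases List.mem_cons.mp hx with rfl | hx2
    · exact ha
    · rwa [List.eq_of_mem_replicate hx2]
  · rw [List.sum_cons, List.sum_replicate, ← Nat.cast_smul_eq_nsmul ℚ]
    exact h

lemma pos_add_add_nsmul_ne_zero (a b g : V) (ha : a ∈ R.pos) (hb : b ∈ R.pos)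
    (hg : g ∈ R.pos) (k : ℕ) : a + b + (k : ℚ) • g ≠ 0 := by
  intro h
  apply R.pos_list_sum_ne (a :: b :: List.replicate k g) ?_ (by simp) ?_
  · intro x hx
    rcases List.mem_cons.mp hx with rfl | hx2
    · exact ha
    · rcases List.mem_cons.mp hx2 with rfl | hx3
      · exact hb
      · rwa [List.eq_of_mem_replicate hx3]
  · rw [List.sum_cons, List.sum_cons, List.sum_replicate, ← Nat.cast_smul_eq_nsmul ℚ,
      ← add_assoc]
    exact h

end Lemmas

/-- If `γ` is a maximal inversion of `w`, then `-w⁻¹γ` is a quantum root and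
`ℓ(w s_{-w⁻¹γ}) = ℓ(w) - ℓ(s_{-w⁻¹γ})`, i.e. `w → s_γ w` is a quantum edge in
the quantum Bruhat graph. -/
theorem maxInv_quantum_edge (w winv : Module.End ℚ V) (hw : R.IsWeyl w)
    (h₁ : w * winv = 1) (h₂ : winv * w = 1) (γ : V) (hγ : R.IsMaxInv winv γ) :
    R.IsQuantumRoot (-(winv γ)) ∧
      R.len w = R.len (w * R.refl (-(winv γ))) + R.len (R.refl (-(winv γ))) := by
  classical
  have huw : ∀ x : V, winv (w x) = x := fun x => by
    have h : (winv * w) x = (1 : Module.End ℚ V) x := by rw [h₂]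
    simpa using h
  have hwu : ∀ x : V, w (winv x) = x := fun x => by
    have h : (w * winv) x = (1 : Module.End ℚ V) x := by rw [h₁]
    simpa using h
  have hwinj : Function.Injective w := fun x y hxy => by
    rw [← huw x, ← huw y, hxy]
  have hwΦ : ∀ x ∈ R.Φ, w x ∈ R.Φ := R.weyl_maps_phi hw
  have huΦ : ∀ x ∈ R.Φ, winv x ∈ R.Φ := by
    intro x hx
    have hmt : Set.MapsTo w R.Φ R.Φ := hwΦ
    have hbij : Set.BijOn w R.Φ R.Φ :=
      (R.finite.injOn_iff_bijOn_of_mapsTo hmt).mp hwinj.injOn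
    obtain ⟨z, hz, hzx⟩ := hbij.surjOn hx
    rw [← hzx, huw]; exact hz
  obtain ⟨⟨hγpos, hγinv⟩, hmax⟩ := hγ
  have hγΦ : γ ∈ R.Φ := R.pos_sub hγpos
  have huγΦ : winv γ ∈ R.Φ := huΦ _ hγΦ
  set β := -(winv γ) with hβdef
  have hβpos : β ∈ R.pos := R.neg_mem_pos huγΦ hγinv
  have hβΦ : β ∈ R.Φ := R.pos_sub hβpos
  have hwβ : w β = -γ := by rw [hβdef, map_neg, hwu]
  have pββ : R.pairing β β = 2 := R.pairing_self β hβΦ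
  set N : Set V := {α | α ∈ R.pos ∧ R.refl β α ∉ R.pos} with hN
  have hposfin : R.pos.Finite := R.finite.subset R.pos_sub
  have hNfin : N.Finite := hposfin.subset fun x hx => hx.1
  have hβN : β ∈ N :=
    ⟨hβpos, by rw [R.refl_root_self hβΦ]; exact R.not_pos_and_neg β hβpos⟩
  have hNneg : ∀ α ∈ N, -(R.refl β α) ∈ N := by
    intro α hα
    refine ⟨R.neg_mem_pos (R.refl_mem hβΦ (R.pos_sub hα.1)) hα.2, ?_⟩
    rw [map_neg, R.refl_refl hβΦ]
    exact R.not_pos_and_neg α hα.1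
  have hC : ∀ α ∈ N, α ≠ β → ∃ k : ℕ, 1 ≤ k ∧ R.pairing β α = (k : ℚ) := by
    intro α hα hne
    obtain ⟨hαpos, hαneg⟩ := hα
    have hαΦ := R.pos_sub hαpos
    obtain ⟨n, hn⟩ := R.pairing_int β hβΦ α hαΦ
    have hνpos : -(R.refl β α) ∈ R.pos := R.neg_mem_pos (R.refl_mem hβΦ hαΦ) hαneg
    have hn1 : 1 ≤ n := by
      by_contra hle
      push_neg at hle
      have hle' : n ≤ 0 := by omega
      have hq : (((-n).toNat : ℕ) : ℚ) = -(n : ℚ) := by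
        have htn : (((-n).toNat : ℕ) : ℤ) = -n := Int.toNat_of_nonneg (by omega)
        exact_mod_cast htn
      have hzero : -(R.refl β α) + α + (((-n).toNat : ℕ) : ℚ) • β = 0 := by
        rw [hq, R.refl_apply, hn]
        module
      exact R.pos_add_add_nsmul_ne_zero _ α β hνpos hαpos hβpos (-n).toNat hzero
    refine ⟨n.toNat, by omega, ?_⟩
    rw [hn]
    have htn : ((n.toNat : ℕ) : ℤ) = n := Int.toNat_of_nonneg (by omega)
    exact_mod_cast htn.symm
  -- Step 1: pairing is 1 and w maps inversions of s_β to negatives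
  have hstep : ∀ α ∈ N, α ≠ β → R.pairing β α = 1 ∧ w α ∉ R.pos := by
    intro α hαN hne
    obtain ⟨hαpos, hαneg⟩ := hαN
    have hαΦ : α ∈ R.Φ := R.pos_sub hαpos
    obtain ⟨k, hk1, hk⟩ := hC α ⟨hαpos, hαneg⟩ hne
    set α'' := -(R.refl β α) with hα''def
    have hα''N : α'' ∈ N := hNneg α ⟨hαpos, hαneg⟩
    obtain ⟨hα''pos, hα''neg⟩ := hα''N
    have hα''Φ : α'' ∈ R.Φ := R.pos_sub hα''pos
    have hα''eq : α'' = (k : ℚ) • β - α := by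
      rw [hα''def, R.refl_apply, hk]; module
    have hα''ne : α'' ≠ β := by
      intro h
      have hαeq : α = ((k : ℚ) - 1) • β := by
        have h5 : α - ((k : ℚ) - 1) • β = β - α'' := by
          rw [hα''eq]; module
        rw [← sub_eq_zero, h5, h]
        exact sub_self β
      rcases R.reduced β hβΦ ((k : ℚ) - 1) (hαeq ▸ hαΦ) with h1 | h1
      · exact hne (by rw [hαeq, h1, one_smul])
      · apply R.not_pos_and_neg β hβpos
        have h6 : α = -β := by rw [hαeq, h1]; module
        rwa [← h6]
    set x := w α with hx
    set y := w α'' with hy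
    have hxΦ : x ∈ R.Φ := hwΦ _ hαΦ
    have hyΦ : y ∈ R.Φ := hwΦ _ hα''Φ
    have hxy : x + y + (k : ℚ) • γ = 0 := by
      have h1 : α + α'' = (k : ℚ) • β := by rw [hα''eq]; module
      have h2 : x + y = w (α + α'') := by rw [hx, hy, map_add]
      rw [h2, h1, map_smul, hwβ]; module
    have hkc : ((k - 1 : ℕ) : ℚ) = (k : ℚ) - 1 := by
      push_cast [hk1]; ring
    have hxnp : x ∉ R.pos := by
      intro hxpos
      by_cases hyp : y ∈ R.pos
      · exact R.pos_add_add_nsmul_ne_zero x y γ hxpos hyp hγpos k hxy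
      · have hynp : -y ∈ R.pos := R.neg_mem_pos hyΦ hyp
        have hδinv : -y ∈ R.inversions winv := by
          refine ⟨hynp, ?_⟩
          rw [map_neg, hy, huw]
          exact fun hcon => R.not_pos_and_neg α'' hα''pos hcon
        have hyeq : -y - γ = x + ((k - 1 : ℕ) : ℚ) • γ := by
          rw [hkc]
          have h4 : -y - γ - (x + ((k : ℚ) - 1) • γ) = -(x + y + (k : ℚ) • γ) := by
            module
          rw [← sub_eq_zero, h4, hxy, neg_zero]
        have hδne : -y ≠ γ := by
          intro hcon
          apply R.pos_add_nsmul_ne_zero x γ hxpos hγpos (k - 1)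
          rw [← hyeq, hcon, sub_self]
        apply hmax (-y) hδinv hδne
        rw [hyeq, Nat.cast_smul_eq_nsmul]
        exact AddSubmonoid.add_mem _ (AddSubmonoid.subset_closure hxpos)
          (nsmul_mem (AddSubmonoid.subset_closure hγpos) _)
    have hynp : y ∉ R.pos := by
      intro hypos
      have hxnpos : -x ∈ R.pos := R.neg_mem_pos hxΦ hxnp
      have hδinv : -x ∈ R.inversions winv := by
        refine ⟨hxnpos, ?_⟩
        rw [map_neg, hx, huw]
        exact fun hcon => R.not_pos_and_neg α hαpos hcon
      have hxeq : -x - γ = y + ((k - 1 : ℕ) : ℚ) • γ := by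
        rw [hkc]
        have h4 : -x - γ - (y + ((k : ℚ) - 1) • γ) = -(x + y + (k : ℚ) • γ) := by
          module
        rw [← sub_eq_zero, h4, hxy, neg_zero]
      have hδne : -x ≠ γ := by
        intro hcon
        apply R.pos_add_nsmul_ne_zero y γ hypos hγpos (k - 1)
        rw [← hxeq, hcon, sub_self]
      apply hmax (-x) hδinv hδne
      rw [hxeq, Nat.cast_smul_eq_nsmul]
      exact AddSubmonoid.add_mem _ (AddSubmonoid.subset_closure hypos)
        (nsmul_mem (AddSubmonoid.subset_closure hγpos) _)
    have hkone : k = 1 := by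
      by_contra hk2'
      have hk2 : 2 ≤ k := by omega
      have hkQ : (2 : ℚ) ≤ (k : ℚ) := by exact_mod_cast hk2
      have hBαβ : 0 < R.B α β := by
        have h1 := R.B_pairing hβΦ hαΦ
        have h2 := R.B_self_pos hβΦ
        rw [hk] at h1
        rw [R.B_symm]
        nlinarith
      have hηΦ : α - β ∈ R.Φ := (R.sub_mem_of_B_pos hαΦ hβΦ hBαβ).resolve_left hne
      have hpβα'' : R.pairing β α'' = (k : ℚ) := by
        rw [hα''eq, map_sub, map_smul, pββ, hk, smul_eq_mul]
        ring
      have hBα''β : 0 < R.B α'' β := by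
        have h1 := R.B_pairing hβΦ hα''Φ
        have h2 := R.B_self_pos hβΦ
        rw [hpβα''] at h1
        rw [R.B_symm]
        nlinarith
      have hη'Φ : α'' - β ∈ R.Φ :=
        (R.sub_mem_of_B_pos hα''Φ hβΦ hBα''β).resolve_left hα''ne
      have hwη : w (α - β) = x + γ := by rw [map_sub, hwβ, hx]; module
      have hwη' : w (α'' - β) = y + γ := by rw [map_sub, hwβ, hy]; module
      have hwηpos : w (α - β) ∈ R.pos := by
        by_contra hnp
        have h1 : -(x + γ) ∈ R.pos := by
          rw [← hwη]; exact R.neg_mem_pos (hwΦ _ hηΦ) hnp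
        have hxneg : -x ∈ R.pos := R.neg_mem_pos hxΦ hxnp
        have hδinv : -x ∈ R.inversions winv := by
          refine ⟨hxneg, ?_⟩
          rw [map_neg, hx, huw]
          exact fun hcon => R.not_pos_and_neg α hαpos hcon
        have hδne : -x ≠ γ := by
          intro hcon
          apply hne
          apply hwinj
          rw [← hx, hwβ, ← hcon]
          module
        apply hmax (-x) hδinv hδne
        rw [show -x - γ = -(x + γ) by module]
        exact AddSubmonoid.subset_closure h1
      have hwη'pos : w (α'' - β) ∈ R.pos := by
        by_contra hnp
        have h1 : -(y + γ) ∈ R.pos := by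
          rw [← hwη']; exact R.neg_mem_pos (hwΦ _ hη'Φ) hnp
        have hyneg : -y ∈ R.pos := R.neg_mem_pos hyΦ hynp
        have hδinv : -y ∈ R.inversions winv := by
          refine ⟨hyneg, ?_⟩
          rw [map_neg, hy, huw]
          exact fun hcon => R.not_pos_and_neg α'' hα''pos hcon
        have hδne : -y ≠ γ := by
          intro hcon
          apply hα''ne
          apply hwinj
          rw [← hy, hwβ, ← hcon]
          module
        apply hmax (-y) hδinv hδne
        rw [show -y - γ = -(y + γ) by module]
        exact AddSubmonoid.subset_closure h1
      have hsum : w (α - β) + w (α'' - β) + ((k - 2 : ℕ) : ℚ) • γ = 0 := by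
        have hc2 : ((k - 2 : ℕ) : ℚ) = (k : ℚ) - 2 := by push_cast [hk2]; ring
        rw [hwη, hwη', hc2]
        have h4 : x + γ + (y + γ) + ((k : ℚ) - 2) • γ - 0
            = x + y + (k : ℚ) • γ - 0 := by module
        rw [← sub_eq_zero, h4, sub_zero]
        exact hxy
      exact R.pos_add_add_nsmul_ne_zero _ _ γ hwηpos hwη'pos hγpos (k - 2) hsum
    refine ⟨by rw [hk, hkone]; norm_num, hxnp⟩
  -- N is contained in the inversion set of w
  set Iw : Set V := {α | α ∈ R.pos ∧ w α ∉ R.pos} with hIw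
  have hNIw : ∀ α ∈ N, α ∈ Iw := by
    intro α hα
    refine ⟨hα.1, ?_⟩
    by_cases h : α = β
    · rw [h, hwβ]; exact R.not_pos_and_neg γ hγpos
    · exact (hstep α hα h).2
  -- counting: the quantum root condition
  set posF := hposfin.toFinset with hposF
  set NF := hNfin.toFinset with hNF
  have hNFsub : NF ⊆ posF := by
    intro a ha
    exact hposfin.mem_toFinset.mpr (hNfin.mem_toFinset.mp ha).1
  have hβNF : β ∈ NF := hNfin.mem_toFinset.mpr hβN
  have hcard1 : 1 ≤ NF.card := Finset.card_pos.mpr ⟨β, hβNF⟩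
  have h2ρ : R.pairing β R.twoRho = ∑ a ∈ posF, R.pairing β a := by
    rw [show R.twoRho = ∑ᶠ a ∈ R.pos, a from rfl,
      ← Set.Finite.coe_toFinset hposfin, finsum_mem_coe_finset, map_sum]
  have hsplit : ∑ a ∈ posF, R.pairing β a
      = ∑ a ∈ posF \ NF, R.pairing β a + ∑ a ∈ NF, R.pairing β a :=
    (Finset.sum_sdiff hNFsub).symm
  have hpre : ∀ a : V, R.pairing β (R.refl β a) = - R.pairing β a := by
    intro a
    rw [R.refl_apply, map_sub, map_smul, pββ]
    simp; ring
  have houtside : ∑ a ∈ posF \ NF, R.pairing β a = 0 := by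
    apply Finset.sum_involution (g := fun a _ => R.refl β a)
    · intro a ha
      rw [hpre]; ring
    · intro a ha hfa
      intro hcon
      apply hfa
      have h5 : R.pairing β a • β = 0 := by
        have := R.refl_apply a  -- not needed
        have h6 : a - R.pairing β a • β = a := by rw [← R.refl_apply]; exact hcon
        have h7 : R.pairing β a • β = a - (a - R.pairing β a • β) := by module
        rw [h7, h6, sub_self]
      rcases smul_eq_zero.mp h5 with h8 | h8
      · exact h8
      · exact absurd h8 (R.root_ne_zero hβΦ)
    · intro a ha
      obtain ⟨hapos', hanN⟩ := Finset.mem_sdiff.mp ha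
      have hapos : a ∈ R.pos := hposfin.mem_toFinset.mp hapos'
      have hrpos : R.refl β a ∈ R.pos := by
        by_contra hrnp
        exact hanN (hNfin.mem_toFinset.mpr ⟨hapos, hrnp⟩)
      refine Finset.mem_sdiff.mpr ⟨hposfin.mem_toFinset.mpr hrpos, ?_⟩
      intro hcon
      have h9 := (hNfin.mem_toFinset.mp hcon).2
      rw [R.refl_refl hβΦ] at h9
      exact h9 hapos
    · intro a ha
      exact R.refl_refl hβΦ a
  have hinside : ∑ a ∈ NF, R.pairing β a = ((NF.card : ℚ)) + 1 := by
    rw [← Finset.add_sum_erase _ _ hβNF, pββ]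
    have h10 : ∑ a ∈ NF.erase β, R.pairing β a = ∑ _a ∈ NF.erase β, (1 : ℚ) := by
      apply Finset.sum_congr rfl
      intro a ha
      obtain ⟨hane, haNF⟩ := Finset.mem_erase.mp ha
      exact (hstep a (hNfin.mem_toFinset.mp haNF) hane).1
    rw [h10, Finset.sum_const, Finset.card_erase_of_mem hβNF, nsmul_eq_mul, mul_one]
    have h11 : ((NF.card - 1 : ℕ) : ℚ) = (NF.card : ℚ) - 1 := by
      push_cast [hcard1]; ring
    rw [h11]; ring
  have hNcard : N.ncard = NF.card := Set.ncard_eq_toFinset_card N hNfin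
  have hquantum : (R.len (R.refl β) : ℚ) = R.pairing β R.twoRho - 1 := by
    have hlen : R.len (R.refl β) = N.ncard := rfl
    rw [hlen, h2ρ, hsplit, houtside, hinside, hNcard]
    ring
  -- counting: the length additivity
  set Iws : Set V := {α | α ∈ R.pos ∧ (w * R.refl β) α ∉ R.pos} with hIws
  have hIwfin : Iw.Finite := hposfin.subset fun a ha => ha.1
  have hIwsfin : Iws.Finite := hposfin.subset fun a ha => ha.1
  have hmul : ∀ a : V, (w * R.refl β) a = w (R.refl β a) := fun a => rfl
  have himg : R.refl β '' Iws = Iw \ N := by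
    apply Set.Subset.antisymm
    · rintro _ ⟨a, ⟨hapos, hanp⟩, rfl⟩
      rw [hmul] at hanp
      have haΦ := R.pos_sub hapos
      have hrpos : R.refl β a ∈ R.pos := by
        by_contra hrnp
        have h1 : -(R.refl β a) ∈ N := hNneg a ⟨hapos, hrnp⟩
        have h2 := (hNIw _ h1).2
        rw [map_neg] at h2
        have h3 : w (R.refl β a) ∈ R.Φ := hwΦ _ (R.refl_mem hβΦ haΦ)
        rcases R.mem_pos_or_neg _ h3 with h | h
        · exact hanp h
        · exact h2 h
      refine ⟨⟨hrpos, hanp⟩, ?_⟩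
      intro hcon
      exact hcon.2 (by rwa [R.refl_refl hβΦ])
    · rintro a ⟨⟨hapos, hwnp⟩, haN⟩
      have haΦ := R.pos_sub hapos
      refine ⟨R.refl β a, ⟨?_, ?_⟩, R.refl_refl hβΦ a⟩
      · by_contra hrnp
        exact haN ⟨hapos, hrnp⟩
      · rw [hmul, R.refl_refl hβΦ]
        exact hwnp
  have hcount : Iw.ncard = Iws.ncard + N.ncard := by
    have h1 : (Iw \ N).ncard + N.ncard = Iw.ncard :=
      Set.ncard_diff_add_ncard_of_subset (fun a ha => hNIw a ha) hIwfin
    have h2 : Iws.ncard = (Iw \ N).ncard := by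
      rw [← himg, Set.ncard_image_of_injective _ (R.refl_inj hβΦ)]
    omega
  exact ⟨⟨hβpos, hquantum⟩, hcount⟩
end RootSystemData
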